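/- (Discrete tight frame property.) With the discrete setup below, for every function f : X → ℂ one has ∑_{(a,θ) ∈ P} ∑_{b ∈ B} |W_f(a,θ,b)|² (L_a/L_B)² = ∑_{x ∈ X} |f(x)|². -/

import Mathlib

noncomputable section
open scoped Real
open Finset

/-- The discrete Fourier grid `Ξ = {(ξ₁,ξ₂) ∈ ℤ² : -L/2 ≤ ξᵢ < L/2}` (the conditions are
encoded as `-L ≤ 2ξᵢ < L`). -/
def Xi (L : ℕ) : Finset (ℤ × ℤ) :=
  ((Finset.Ico (-(L : ℤ)) (L : ℤ)) ×ˢ (Finset.Ico (-(L : ℤ)) (L : ℤ))).filter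
    (fun ξ => -(L : ℤ) ≤ 2 * ξ.1 ∧ 2 * ξ.1 < (L : ℤ) ∧ -(L : ℤ) ≤ 2 * ξ.2 ∧ 2 * ξ.2 < (L : ℤ))

/-- The discrete Fourier transform `f̂(ξ) = (1/L) ∑_{x ∈ X} e^{-2πi x·ξ} f(x)`, where the spatial
grid point indexed by `n ∈ (Fin L)²` is `x = (n₁/L, n₂/L)`. -/
def dft (L : ℕ) (f : Fin L × Fin L → ℂ) (ξ : ℤ × ℤ) : ℂ :=
  (L : ℂ)⁻¹ * ∑ n : Fin L × Fin L,
    Complex.exp (-(2 * ↑π * Complex.I) *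
        ((((n.1 : ℕ) : ℂ) * (ξ.1 : ℂ) + ((n.2 : ℕ) : ℂ) * (ξ.2 : ℂ)) / (L : ℂ))) * f n

/-- `L_a = a^{(s+t)/2}`. -/
def La (s t : ℝ) (p : ℝ × ℝ) : ℝ := p.1 ^ ((s + t) / 2)

/-- The discrete general curvelet transform
`W_f(a,θ,b) = (1/L_a) ∑_{ξ ∈ Ξ} e^{2πi b·ξ} g_{a,θ}(ξ) f̂(ξ)`, where the spatial sampling point
indexed by `m ∈ (Fin L_B)²` is `b = (m₁/L_B, m₂/L_B)`. -/
def Wd (L LB : ℕ) (s t : ℝ) (g : ℝ × ℝ → ℤ × ℤ → ℝ) (p : ℝ × ℝ)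
    (f : Fin L × Fin L → ℂ) (m : Fin LB × Fin LB) : ℂ :=
  ((La s t p : ℝ) : ℂ)⁻¹ * ∑ ξ ∈ Xi L,
    Complex.exp ((2 * ↑π * Complex.I) *
        ((((m.1 : ℕ) : ℂ) * (ξ.1 : ℂ) + ((m.2 : ℕ) : ℂ) * (ξ.2 : ℂ)) / (LB : ℂ))) *
      ((g p ξ : ℝ) : ℂ) * dft L f ξ

/-! ### Auxiliary lemmas -/

lemma char_sum_range (N : ℕ) (hN : 0 < N) (k : ℤ) :
    ∑ j ∈ Finset.range N, Complex.exp (2 * ↑π * Complex.I * k * j / N)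
      = if (N:ℤ) ∣ k then (N:ℂ) else 0 := by
  have hNC : (N:ℂ) ≠ 0 := Nat.cast_ne_zero.2 hN.ne'
  have hπ : (π:ℂ) ≠ 0 := by exact_mod_cast Real.pi_ne_zero
  have h2 : (2:ℂ) * π * Complex.I ≠ 0 := by simp [hπ, Complex.I_ne_zero]
  set ω := Complex.exp (2 * ↑π * Complex.I * k / N) with hω
  have hpow : ∀ j : ℕ, Complex.exp (2 * ↑π * Complex.I * k * j / N) = ω ^ j := by
    intro j
    rw [hω, ← Complex.exp_nat_mul]
    ring_nf
  simp only [hpow]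
  split_ifs with h
  · obtain ⟨d, hd⟩ := h
    have hω1 : ω = 1 := by
      rw [hω, hd]
      have : 2 * ↑π * Complex.I * ((↑(N:ℤ) * (d:ℤ) : ℤ) : ℂ) / N = d * (2 * ↑π * Complex.I) := by
        push_cast
        field_simp
      rw [this, Complex.exp_int_mul_two_pi_mul_I]
    simp [hω1]
  · have hω1 : ω ≠ 1 := by
      intro hc
      rw [hω, Complex.exp_eq_one_iff] at hc
      obtain ⟨n, hn⟩ := hc
      apply h
      refine ⟨n, ?_⟩
      have hkey : (2:ℂ) * π * Complex.I * k = 2 * π * Complex.I * (N * n) := by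
        field_simp at hn
        linear_combination (2 * ↑π * Complex.I) * hn
      have := mul_left_cancel₀ h2 hkey
      exact_mod_cast this
    have hωN : ω ^ N = 1 := by
      rw [hω, ← Complex.exp_nat_mul]
      have : (N:ℂ) * (2 * ↑π * Complex.I * k / N) = k * (2 * ↑π * Complex.I) := by
        field_simp
      rw [this, Complex.exp_int_mul_two_pi_mul_I]
    rw [geom_sum_eq hω1, hωN]
    simp

lemma char_sum_fin (N : ℕ) (hN : 0 < N) (k : ℤ) :
    ∑ j : Fin N, Complex.exp (2 * ↑π * Complex.I * k * ((j:ℕ):ℂ) / N)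
      = if (N:ℤ) ∣ k then (N:ℂ) else 0 := by
  rw [Fin.sum_univ_eq_sum_range (fun j : ℕ => Complex.exp (2 * ↑π * Complex.I * k * (j:ℂ) / N)) N,
    char_sum_range N hN k]

lemma Ico_eq_image (c : ℤ) (N : ℕ) :
    Finset.Ico c (c + N) = (Finset.range N).image (fun i : ℕ => c + i) := by
  ext x
  simp only [Finset.mem_Ico, Finset.mem_image, Finset.mem_range]
  constructor
  · rintro ⟨h1, h2⟩
    exact ⟨(x - c).toNat, by omega, by omega⟩
  · rintro ⟨i, hi, rfl⟩
    omega

lemma char_sum_Ico (N : ℕ) (hN : 0 < N) (k c : ℤ) :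
    ∑ j ∈ Finset.Ico c (c + N), Complex.exp (2 * ↑π * Complex.I * k * j / N)
      = if (N:ℤ) ∣ k then (N:ℂ) else 0 := by
  rw [Ico_eq_image, Finset.sum_image (by intro a _ b _ h; have h' : c + (a:ℤ) = c + b := h; omega)]
  have hsplit : ∀ i : ℕ, Complex.exp (2 * ↑π * Complex.I * k * ((c + i : ℤ) : ℂ) / N)
      = Complex.exp (2 * ↑π * Complex.I * k * (c:ℂ) / N) *
        Complex.exp (2 * ↑π * Complex.I * k * (i:ℕ) / N) := by
    intro i
    rw [← Complex.exp_add]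
    push_cast
    ring_nf
  simp only [hsplit, ← Finset.mul_sum, char_sum_range N hN k]
  split_ifs with h
  · obtain ⟨d, hd⟩ := h
    have : Complex.exp (2 * ↑π * Complex.I * k * (c:ℂ) / N) = 1 := by
      rw [hd]
      have hNC : (N:ℂ) ≠ 0 := Nat.cast_ne_zero.2 hN.ne'
      have : 2 * ↑π * Complex.I * ((↑(N:ℤ) * (d:ℤ) : ℤ) : ℂ) * (c:ℂ) / N
          = ((d * c : ℤ) : ℂ) * (2 * ↑π * Complex.I) := by
        push_cast; field_simp
      rw [this, Complex.exp_int_mul_two_pi_mul_I]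
    rw [this, one_mul]
  · simp

lemma Xi_eq (L : ℕ) (hL : 0 < L) :
    Xi L = (Finset.Ico (-((L:ℤ)/2)) (-((L:ℤ)/2) + L)) ×ˢ
      (Finset.Ico (-((L:ℤ)/2)) (-((L:ℤ)/2) + L)) := by
  ext ξ
  simp only [Xi, Finset.mem_filter, Finset.mem_product, Finset.mem_Ico]
  omega

lemma orth_m (LB : ℕ) (hLB : 0 < LB) (ξ ξ' : ℤ × ℤ) :
    ∑ m : Fin LB × Fin LB,
      Complex.exp ((2*↑π*Complex.I) * ((((m.1:ℕ):ℂ) * (ξ.1:ℂ) + ((m.2:ℕ):ℂ) * (ξ.2:ℂ)) / (LB:ℂ))) *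
        (starRingEnd ℂ) (Complex.exp ((2*↑π*Complex.I) *
          ((((m.1:ℕ):ℂ) * (ξ'.1:ℂ) + ((m.2:ℕ):ℂ) * (ξ'.2:ℂ)) / (LB:ℂ))))
    = if ((LB:ℤ) ∣ ξ.1 - ξ'.1 ∧ (LB:ℤ) ∣ ξ.2 - ξ'.2) then ((LB:ℂ))^2 else 0 := by
  have hpt : ∀ m : Fin LB × Fin LB,
      Complex.exp ((2*↑π*Complex.I) * ((((m.1:ℕ):ℂ) * (ξ.1:ℂ) + ((m.2:ℕ):ℂ) * (ξ.2:ℂ)) / (LB:ℂ))) *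
        (starRingEnd ℂ) (Complex.exp ((2*↑π*Complex.I) *
          ((((m.1:ℕ):ℂ) * (ξ'.1:ℂ) + ((m.2:ℕ):ℂ) * (ξ'.2:ℂ)) / (LB:ℂ))))
      = Complex.exp (2 * ↑π * Complex.I * ((ξ.1 - ξ'.1 : ℤ):ℂ) * ((m.1:ℕ):ℂ) / LB) *
        Complex.exp (2 * ↑π * Complex.I * ((ξ.2 - ξ'.2 : ℤ):ℂ) * ((m.2:ℕ):ℂ) / LB) := by
    intro m
    rw [← Complex.exp_conj, ← Complex.exp_add, ← Complex.exp_add]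
    congr 1
    simp only [map_mul, map_add, map_div₀, Complex.conj_I, Complex.conj_natCast,
      map_intCast, Complex.conj_ofReal, map_ofNat]
    push_cast
    ring
  simp only [hpt]
  rw [Fintype.sum_prod_type]
  simp only [← Finset.sum_mul, ← Finset.mul_sum]
  rw [char_sum_fin LB hLB (ξ.1 - ξ'.1), char_sum_fin LB hLB (ξ.2 - ξ'.2)]
  by_cases h1 : (LB:ℤ) ∣ ξ.1 - ξ'.1 <;> by_cases h2 : (LB:ℤ) ∣ ξ.2 - ξ'.2 <;>
    simp [h1, h2, sq]

lemma orth_xi (L : ℕ) (hL : 0 < L) (n n' : Fin L × Fin L) :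
    ∑ ξ ∈ Xi L,
      Complex.exp (-(2*↑π*Complex.I) * ((((n.1:ℕ):ℂ) * (ξ.1:ℂ) + ((n.2:ℕ):ℂ) * (ξ.2:ℂ)) / (L:ℂ))) *
        (starRingEnd ℂ) (Complex.exp (-(2*↑π*Complex.I) *
          ((((n'.1:ℕ):ℂ) * (ξ.1:ℂ) + ((n'.2:ℕ):ℂ) * (ξ.2:ℂ)) / (L:ℂ))))
    = if n = n' then ((L:ℂ))^2 else 0 := by
  have hpt : ∀ ξ ∈ Xi L,
      Complex.exp (-(2*↑π*Complex.I) * ((((n.1:ℕ):ℂ) * (ξ.1:ℂ) + ((n.2:ℕ):ℂ) * (ξ.2:ℂ)) / (L:ℂ))) *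
        (starRingEnd ℂ) (Complex.exp (-(2*↑π*Complex.I) *
          ((((n'.1:ℕ):ℂ) * (ξ.1:ℂ) + ((n'.2:ℕ):ℂ) * (ξ.2:ℂ)) / (L:ℂ))))
      = Complex.exp (2 * ↑π * Complex.I * (((n'.1:ℕ) - (n.1:ℕ) : ℤ):ℂ) * (ξ.1:ℂ) / L) *
        Complex.exp (2 * ↑π * Complex.I * (((n'.2:ℕ) - (n.2:ℕ) : ℤ):ℂ) * (ξ.2:ℂ) / L) := by
    intro ξ _
    rw [← Complex.exp_conj, ← Complex.exp_add, ← Complex.exp_add]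
    congr 1
    simp only [map_mul, map_add, map_div₀, Complex.conj_I, Complex.conj_natCast,
      map_intCast, Complex.conj_ofReal, map_ofNat, map_neg]
    push_cast
    ring
  rw [Finset.sum_congr rfl hpt, Xi_eq L hL, Finset.sum_product]
  simp only [← Finset.sum_mul, ← Finset.mul_sum]
  rw [char_sum_Ico L hL _ _, char_sum_Ico L hL _ _]
  by_cases h1 : (L:ℤ) ∣ ((n'.1:ℕ):ℤ) - ((n.1:ℕ):ℤ) <;>
    by_cases h2 : (L:ℤ) ∣ ((n'.2:ℕ):ℤ) - ((n.2:ℕ):ℤ)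
  · have e1 : n.1 = n'.1 := by
      have := Int.eq_zero_of_abs_lt_dvd h1 (abs_lt.2
        ⟨by have := n.1.isLt; have := n'.1.isLt; omega,
         by have := n.1.isLt; have := n'.1.isLt; omega⟩)
      have : ((n'.1:ℕ):ℤ) = ((n.1:ℕ):ℤ) := by omega
      exact (Fin.ext (by exact_mod_cast this)).symm
    have e2 : n.2 = n'.2 := by
      have := Int.eq_zero_of_abs_lt_dvd h2 (abs_lt.2
        ⟨by have := n.2.isLt; have := n'.2.isLt; omega,
         by have := n.2.isLt; have := n'.2.isLt; omega⟩)
      have : ((n'.2:ℕ):ℤ) = ((n.2:ℕ):ℤ) := by omega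
      exact (Fin.ext (by exact_mod_cast this)).symm
    have : n = n' := Prod.ext e1 e2
    simp [h1, h2, this, sq]
  · have : n ≠ n' := by rintro rfl; exact h2 ⟨0, by ring⟩
    simp [h1, h2, this]
  · have : n ≠ n' := by rintro rfl; exact h1 ⟨0, by ring⟩
    simp [h1, h2, this]
  · have : n ≠ n' := by rintro rfl; exact h1 ⟨0, by ring⟩
    simp [h1, h2, this]

lemma parseval (L : ℕ) (hL : 0 < L) (f : Fin L × Fin L → ℂ) :
    ∑ ξ ∈ Xi L, dft L f ξ * (starRingEnd ℂ) (dft L f ξ)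
      = ∑ n : Fin L × Fin L, f n * (starRingEnd ℂ) (f n) := by
  have hLC : (L:ℂ) ≠ 0 := Nat.cast_ne_zero.2 hL.ne'
  set e : (Fin L × Fin L) → (ℤ × ℤ) → ℂ := fun n ξ =>
    Complex.exp (-(2 * ↑π * Complex.I) *
      ((((n.1 : ℕ) : ℂ) * (ξ.1 : ℂ) + ((n.2 : ℕ) : ℂ) * (ξ.2 : ℂ)) / (L : ℂ))) with he
  have step1 : ∀ ξ : ℤ × ℤ, dft L f ξ * (starRingEnd ℂ) (dft L f ξ)
      = (L:ℂ)⁻¹ * (L:ℂ)⁻¹ * ∑ n : Fin L × Fin L, ∑ n' : Fin L × Fin L,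
          (f n * (starRingEnd ℂ) (f n')) * (e n ξ * (starRingEnd ℂ) (e n' ξ)) := by
    intro ξ
    rw [dft]
    rw [map_mul, map_sum, map_inv₀, Complex.conj_natCast, mul_mul_mul_comm,
      Finset.sum_mul_sum]
    congr 1
    refine Finset.sum_congr rfl fun n _ => Finset.sum_congr rfl fun n' _ => ?_
    rw [map_mul]
    ring
  calc ∑ ξ ∈ Xi L, dft L f ξ * (starRingEnd ℂ) (dft L f ξ)
      = (L:ℂ)⁻¹ * (L:ℂ)⁻¹ * ∑ ξ ∈ Xi L, ∑ n : Fin L × Fin L, ∑ n' : Fin L × Fin L,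
          (f n * (starRingEnd ℂ) (f n')) * (e n ξ * (starRingEnd ℂ) (e n' ξ)) := by
        rw [Finset.sum_congr rfl fun ξ _ => step1 ξ, ← Finset.mul_sum]
    _ = (L:ℂ)⁻¹ * (L:ℂ)⁻¹ * ∑ n : Fin L × Fin L, ∑ n' : Fin L × Fin L,
          (f n * (starRingEnd ℂ) (f n')) * ∑ ξ ∈ Xi L, (e n ξ * (starRingEnd ℂ) (e n' ξ)) := by
        rw [Finset.sum_comm]
        congr 1
        refine Finset.sum_congr rfl fun n _ => ?_
        rw [Finset.sum_comm]
        exact Finset.sum_congr rfl fun n' _ => (Finset.mul_sum _ _ _).symm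
    _ = (L:ℂ)⁻¹ * (L:ℂ)⁻¹ * ∑ n : Fin L × Fin L, (f n * (starRingEnd ℂ) (f n)) * (L:ℂ)^2 := by
        congr 1
        refine Finset.sum_congr rfl fun n _ => ?_
        have : ∀ n' : Fin L × Fin L, ∑ ξ ∈ Xi L, (e n ξ * (starRingEnd ℂ) (e n' ξ))
            = if n = n' then ((L:ℂ))^2 else 0 := fun n' => orth_xi L hL n n'
        simp only [this, mul_ite, mul_zero]
        simp
    _ = ∑ n : Fin L × Fin L, f n * (starRingEnd ℂ) (f n) := by
        rw [← Finset.sum_mul]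
        field_simp

lemma key (L LB : ℕ) (hLB : 0 < LB) (s t : ℝ) (g : ℝ × ℝ → ℤ × ℤ → ℝ) (p : ℝ × ℝ)
    (hgP : ∀ ξ ∈ Xi L, ∀ ξ' ∈ Xi L, ξ ≠ ξ' → g p ξ ≠ 0 → g p ξ' ≠ 0 →
      ¬(((LB : ℤ) ∣ ξ.1 - ξ'.1) ∧ ((LB : ℤ) ∣ ξ.2 - ξ'.2)))
    (f : Fin L × Fin L → ℂ) :
    ∑ m : Fin LB × Fin LB, Wd L LB s t g p f m * (starRingEnd ℂ) (Wd L LB s t g p f m)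
      = ((La s t p : ℝ) : ℂ)⁻¹ * ((La s t p : ℝ) : ℂ)⁻¹ * (LB:ℂ)^2 *
        ∑ ξ ∈ Xi L, ((g p ξ : ℝ) : ℂ)^2 * (dft L f ξ * (starRingEnd ℂ) (dft L f ξ)) := by
  set A : ℂ := ((La s t p : ℝ) : ℂ)⁻¹ with hA
  set E : (Fin LB × Fin LB) → (ℤ × ℤ) → ℂ := fun m ξ =>
    Complex.exp ((2 * ↑π * Complex.I) *
      ((((m.1 : ℕ) : ℂ) * (ξ.1 : ℂ) + ((m.2 : ℕ) : ℂ) * (ξ.2 : ℂ)) / (LB : ℂ))) with hE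
  set T : (ℤ × ℤ) → ℂ := fun ξ => ((g p ξ : ℝ) : ℂ) * dft L f ξ with hT
  have hconjA : (starRingEnd ℂ) A = A := by
    rw [hA, map_inv₀, Complex.conj_ofReal]
  have step1 : ∀ m : Fin LB × Fin LB,
      Wd L LB s t g p f m * (starRingEnd ℂ) (Wd L LB s t g p f m)
      = A * A * ∑ ξ ∈ Xi L, ∑ ξ' ∈ Xi L,
          (T ξ * (starRingEnd ℂ) (T ξ')) * (E m ξ * (starRingEnd ℂ) (E m ξ')) := by
    intro m
    have hbody : ∀ ξ ∈ Xi L,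
        Complex.exp ((2 * ↑π * Complex.I) *
          ((((m.1 : ℕ) : ℂ) * (ξ.1 : ℂ) + ((m.2 : ℕ) : ℂ) * (ξ.2 : ℂ)) / (LB : ℂ))) *
          ((g p ξ : ℝ) : ℂ) * dft L f ξ = E m ξ * T ξ := by
      intro ξ _
      rw [hE, hT, mul_assoc]
    rw [Wd, Finset.sum_congr rfl hbody, ← hA]
    rw [map_mul, map_sum, hconjA, mul_mul_mul_comm, Finset.sum_mul_sum]
    congr 1
    refine Finset.sum_congr rfl fun ξ _ => Finset.sum_congr rfl fun ξ' _ => ?_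
    rw [map_mul]
    ring
  calc ∑ m : Fin LB × Fin LB, Wd L LB s t g p f m * (starRingEnd ℂ) (Wd L LB s t g p f m)
      = A * A * ∑ m : Fin LB × Fin LB, ∑ ξ ∈ Xi L, ∑ ξ' ∈ Xi L,
          (T ξ * (starRingEnd ℂ) (T ξ')) * (E m ξ * (starRingEnd ℂ) (E m ξ')) := by
        rw [Finset.sum_congr rfl fun m _ => step1 m, ← Finset.mul_sum]
    _ = A * A * ∑ ξ ∈ Xi L, ∑ ξ' ∈ Xi L,
          (T ξ * (starRingEnd ℂ) (T ξ')) *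
            ∑ m : Fin LB × Fin LB, (E m ξ * (starRingEnd ℂ) (E m ξ')) := by
        rw [Finset.sum_comm]
        congr 1
        refine Finset.sum_congr rfl fun ξ _ => ?_
        rw [Finset.sum_comm]
        exact Finset.sum_congr rfl fun ξ' _ => (Finset.mul_sum _ _ _).symm
    _ = A * A * ∑ ξ ∈ Xi L, (T ξ * (starRingEnd ℂ) (T ξ)) * (LB:ℂ)^2 := by
        congr 1
        refine Finset.sum_congr rfl fun ξ hξ => ?_
        rw [Finset.sum_eq_single_of_mem ξ hξ]
        · rw [orth_m LB hLB ξ ξ]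
          simp
        · intro ξ' hξ' hne
          rw [orth_m LB hLB ξ ξ']
          by_cases hg : g p ξ = 0
          · simp [hT, hg]
          by_cases hg' : g p ξ' = 0
          · simp [hT, hg']
          · rw [if_neg (hgP ξ hξ ξ' hξ' (fun h => hne (h ▸ rfl)) hg hg'), mul_zero]
    _ = A * A * (LB:ℂ)^2 *
        ∑ ξ ∈ Xi L, ((g p ξ : ℝ) : ℂ)^2 * (dft L f ξ * (starRingEnd ℂ) (dft L f ξ)) := by
        have hstep : ∑ ξ ∈ Xi L, (T ξ * (starRingEnd ℂ) (T ξ)) * (LB:ℂ)^2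
            = (LB:ℂ)^2 * ∑ ξ ∈ Xi L,
                ((g p ξ : ℝ) : ℂ)^2 * (dft L f ξ * (starRingEnd ℂ) (dft L f ξ)) := by
          rw [Finset.mul_sum]
          refine Finset.sum_congr rfl fun ξ _ => ?_
          rw [hT, map_mul, Complex.conj_ofReal]
          ring
        rw [hstep]
        ring

lemma mul_conj_norm (z : ℂ) : ((‖z‖:ℝ):ℂ)^2 = z * (starRingEnd ℂ) z := by
  rw [Complex.mul_conj]
  norm_cast
  rw [Complex.normSq_eq_norm_sq]

/-- Discrete tight frame property. With windows `g_{a,θ}` that are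
non-negative, satisfy `∑_{(a,θ) ∈ P} g_{a,θ}(ξ)² = 1` on `Ξ`, and whose supports contain no two
distinct frequencies congruent mod `L_B` in both coordinates,
`∑_{(a,θ) ∈ P} ∑_{b ∈ B} |W_f(a,θ,b)|² (L_a/L_B)² = ∑_{x ∈ X} |f(x)|²`. -/
theorem statement10 (L LB : ℕ) (hL : 0 < L) (hLB : 0 < LB)
    (s t : ℝ) (hs : 1 / 2 < s) (hst : s < t) (ht : t < 1)
    (P : Finset (ℝ × ℝ)) (hP : ∀ p ∈ P, 1 ≤ p.1)
    (g : ℝ × ℝ → ℤ × ℤ → ℝ)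
    (hg0 : ∀ p ∈ P, ∀ ξ ∈ Xi L, 0 ≤ g p ξ)
    (hg1 : ∀ ξ ∈ Xi L, ∑ p ∈ P, (g p ξ) ^ 2 = 1)
    (hg2 : ∀ p ∈ P, ∀ ξ ∈ Xi L, ∀ ξ' ∈ Xi L, ξ ≠ ξ' → g p ξ ≠ 0 → g p ξ' ≠ 0 →
      ¬(((LB : ℤ) ∣ ξ.1 - ξ'.1) ∧ ((LB : ℤ) ∣ ξ.2 - ξ'.2)))
    (f : Fin L × Fin L → ℂ) :
    ∑ p ∈ P, ∑ m : Fin LB × Fin LB, ‖Wd L LB s t g p f m‖ ^ 2 * (La s t p / (LB : ℝ)) ^ 2 =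
      ∑ n : Fin L × Fin L, ‖f n‖ ^ 2 := by
  have hLBC : (LB:ℂ) ≠ 0 := Nat.cast_ne_zero.2 hLB.ne'
  have hLa : ∀ p ∈ P, (0:ℝ) < La s t p := by
    intro p hp
    exact Real.rpow_pos_of_pos (lt_of_lt_of_le zero_lt_one (hP p hp)) _
  have main : ((∑ p ∈ P, ∑ m : Fin LB × Fin LB,
      ‖Wd L LB s t g p f m‖ ^ 2 * (La s t p / (LB : ℝ)) ^ 2 : ℝ) : ℂ)
      = ((∑ n : Fin L × Fin L, ‖f n‖ ^ 2 : ℝ) : ℂ) := by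
    push_cast
    calc ∑ p ∈ P, ∑ m : Fin LB × Fin LB,
        ((‖Wd L LB s t g p f m‖:ℝ):ℂ) ^ 2 * (((La s t p:ℝ):ℂ) / (LB:ℂ)) ^ 2
        = ∑ p ∈ P, (∑ m : Fin LB × Fin LB,
            Wd L LB s t g p f m * (starRingEnd ℂ) (Wd L LB s t g p f m)) *
              (((La s t p:ℝ):ℂ) / (LB:ℂ)) ^ 2 := by
          refine Finset.sum_congr rfl fun p _ => ?_
          rw [Finset.sum_mul]
          exact Finset.sum_congr rfl fun m _ => by rw [mul_conj_norm]
      _ = ∑ p ∈ P, ∑ ξ ∈ Xi L,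
            ((g p ξ : ℝ) : ℂ)^2 * (dft L f ξ * (starRingEnd ℂ) (dft L f ξ)) := by
          refine Finset.sum_congr rfl fun p hp => ?_
          rw [key L LB hLB s t g p (hg2 p hp) f]
          have hLaC : ((La s t p:ℝ):ℂ) ≠ 0 := by
            exact_mod_cast (hLa p hp).ne'
          field_simp
      _ = ∑ ξ ∈ Xi L,
            (∑ p ∈ P, ((g p ξ : ℝ) : ℂ)^2) * (dft L f ξ * (starRingEnd ℂ) (dft L f ξ)) := by
          rw [Finset.sum_comm]
          exact Finset.sum_congr rfl fun ξ _ => (Finset.sum_mul _ _ _).symm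
      _ = ∑ ξ ∈ Xi L, dft L f ξ * (starRingEnd ℂ) (dft L f ξ) := by
          refine Finset.sum_congr rfl fun ξ hξ => ?_
          have : (∑ p ∈ P, ((g p ξ : ℝ) : ℂ)^2) = 1 := by
            have h := hg1 ξ hξ
            have : ((∑ p ∈ P, (g p ξ)^2 : ℝ) : ℂ) = 1 := by rw [h]; norm_num
            rw [← this]
            push_cast
            rfl
          rw [this, one_mul]
      _ = ∑ n : Fin L × Fin L, f n * (starRingEnd ℂ) (f n) := parseval L hL f
      _ = ∑ n : Fin L × Fin L, ((‖f n‖:ℝ):ℂ) ^ 2 := by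
          exact Finset.sum_congr rfl fun n _ => (mul_conj_norm (f n)).symm
  exact_mod_cast main
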